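/- arXiv:1604.04698 — 8 statements merged into one kernel-verified Lean document; each statement's English description precedes it below -/
import Mathlib

section
/- Let N ≥ 1 and let a₁, …, a_N be nonnegative real numbers satisfying the generalized triangle inequality aₙ ≤ ∑_{m ≠ n} a_m for every n. Then there exist real phases θ₁, …, θ_N such that ∑ₙ aₙ · exp(i θₙ) = 0. In particular, if ∑ₙ aₙ = 1 and aₙ ≤ 1/2 for all n, such closing phases exist. -/
open Complex Finset

/-- Splitting a sum over `Fin N` into indices below `j`, equal to `j`, above `j`. -/
lemma fin_split_sum {M : Type*} [AddCommMonoid M] {N j : ℕ} (hj : j < N) (f : Fin N → M) :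
    ∑ n, f n = (∑ n ∈ Finset.univ.filter (fun n : Fin N => (n : ℕ) < j), f n) + f ⟨j, hj⟩
      + ∑ n ∈ Finset.univ.filter (fun n : Fin N => j < (n : ℕ)), f n := by
  rw [← Finset.sum_filter_add_sum_filter_not Finset.univ (fun n : Fin N => (n : ℕ) < j)]
  have h : Finset.univ.filter (fun n : Fin N => ¬ (n : ℕ) < j)
      = insert ⟨j, hj⟩ (Finset.univ.filter fun n : Fin N => j < (n : ℕ)) := by
    ext n
    simp [Fin.ext_iff]
    omega
  rw [h, Finset.sum_insert (by simp), ← add_assoc]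

/-- Triangle closing phases. -/
lemma tri_phases (b c d : ℝ) (hb : 0 ≤ b) (hc : 0 ≤ c)
    (h1 : b ≤ c + d) (h2 : c ≤ b + d) (h3 : d ≤ b + c) :
    ∃ α β : ℝ, (b : ℂ) + c * Complex.exp (Complex.I * α) + d * Complex.exp (Complex.I * β) = 0 := by
  set f : ℝ → ℝ := fun α => ‖(b : ℂ) + c * Complex.exp (Complex.I * α)‖ with hf
  have hcont : Continuous f := continuous_norm.comp (by continuity)
  have h0 : f 0 = b + c := by
    simp only [hf, Complex.ofReal_zero, mul_zero, Complex.exp_zero, mul_one,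
      ← Complex.ofReal_add, Complex.norm_real, Real.norm_eq_abs]
    exact abs_of_nonneg (by linarith)
  have hpi : f Real.pi = |b - c| := by
    simp only [hf, mul_comm Complex.I, Complex.exp_pi_mul_I]
    rw [show (b : ℂ) + c * (-1) = ((b - c : ℝ) : ℂ) by push_cast; ring, Complex.norm_real, Real.norm_eq_abs]
  have hmem : d ∈ Set.uIcc (f 0) (f Real.pi) := by
    rw [h0, hpi, Set.mem_uIcc]
    right
    constructor
    · rw [abs_sub_le_iff]; constructor <;> linarith
    · linarith
  obtain ⟨α, _, hfα⟩ := intermediate_value_uIcc (a := (0:ℝ)) (b := Real.pi)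
    hcont.continuousOn hmem
  set z : ℂ := -((b : ℂ) + c * Complex.exp (Complex.I * α)) with hz
  have habs : ‖z‖ = d := by
    rw [hz, norm_neg]
    exact hfα
  refine ⟨α, z.arg, ?_⟩
  have key : (d : ℂ) * Complex.exp (Complex.I * z.arg) = z := by
    rw [mul_comm Complex.I, ← habs]
    exact Complex.norm_mul_exp_arg_mul_I z
  rw [key, hz]
  ring

/-- If nonnegative side lengths satisfy the generalized triangle inequality, then
there exist phases closing them into a polygon: `∑ₙ aₙ exp(i θₙ) = 0`. -/
theorem closing_phases_exist (N : ℕ) (hN : 1 ≤ N) (a : Fin N → ℝ)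
    (ha : ∀ n, 0 ≤ a n)
    (htri : ∀ n : Fin N, a n ≤ ∑ m ∈ Finset.univ.erase n, a m) :
    ∃ θ : Fin N → ℝ, ∑ n, (a n : ℂ) * Complex.exp (Complex.I * (θ n : ℂ)) = 0 := by
  set S : ℝ := ∑ n, a n with hS
  by_cases hS0 : S = 0
  · refine ⟨fun _ => 0, ?_⟩
    have hzero : ∀ n, a n = 0 := fun n =>
      (Finset.sum_eq_zero_iff_of_nonneg (fun m _ => ha m)).mp hS0 n (Finset.mem_univ n)
    apply Finset.sum_eq_zero
    intro n _
    simp [hzero n]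
  · have hSpos : 0 < S :=
      lt_of_le_of_ne (Finset.sum_nonneg fun n _ => ha n) (Ne.symm hS0)
    -- half bound for each a n
    have hhalf : ∀ n : Fin N, a n ≤ S / 2 := by
      intro n
      have herase : ∑ m ∈ Finset.univ.erase n, a m = S - a n := by
        rw [hS, Finset.sum_erase_eq_sub (Finset.mem_univ n)]
      have := htri n
      rw [herase] at this
      linarith
    set B : ℕ → ℝ := fun j => ∑ n ∈ Finset.univ.filter (fun n : Fin N => (n : ℕ) < j), a n
      with hB
    have hw : S / 2 < B (N - 1 + 1) := by
      have hNe : N - 1 + 1 = N := by omega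
      rw [hNe]
      have hBN : B N = S := by
        rw [hS]
        show ∑ n ∈ Finset.univ.filter (fun n : Fin N => (n : ℕ) < N), a n = ∑ n, a n
        congr 1
        apply Finset.filter_true_of_mem
        intro n _
        exact n.isLt
      rw [hBN]
      linarith
    have hex : ∃ j, S / 2 < B (j + 1) := ⟨N - 1, hw⟩
    set j : ℕ := Nat.find hex with hjdef
    have hj : S / 2 < B (j + 1) := Nat.find_spec hex
    have hjlt : j < N := by
      have : j ≤ N - 1 := Nat.find_le hw
      omega
    set jf : Fin N := ⟨j, hjlt⟩ with hjf
    set C : ℝ := ∑ n ∈ Finset.univ.filter (fun n : Fin N => j < (n : ℕ)), a n with hC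
    -- B (j+1) = B j + a jf
    have hfil : Finset.univ.filter (fun n : Fin N => (n : ℕ) < j + 1)
        = insert jf (Finset.univ.filter (fun n : Fin N => (n : ℕ) < j)) := by
      ext n
      simp [hjf, Fin.ext_iff]
      omega
    have hBsucc : B (j + 1) = B j + a jf := by
      have e1 : B (j + 1) = ∑ n ∈ Finset.univ.filter (fun n : Fin N => (n : ℕ) < j + 1), a n := rfl
      have e2 : B j = ∑ n ∈ Finset.univ.filter (fun n : Fin N => (n : ℕ) < j), a n := rfl
      rw [e1, e2, hfil, Finset.sum_insert (by simp [hjf])]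
      ring
    have hsplitS : S = B j + a jf + C := by
      rw [hS]
      exact fin_split_sum hjlt a
    -- bounds
    have hb0 : B j ≤ S / 2 := by
      rcases Nat.eq_zero_or_pos j with h0 | hpos
      · rw [h0]
        have : B 0 = 0 := by simp [hB]
        rw [this]; linarith
      · obtain ⟨j', hj'⟩ : ∃ j', j = j' + 1 := ⟨j - 1, by omega⟩
        have hmin := Nat.find_min hex (m := j') (by omega)
        push_neg at hmin
        rw [hj']
        exact hmin
    have hb1 : a jf ≤ S / 2 := hhalf jf
    have hb2 : C ≤ S / 2 := by
      have : S / 2 < B j + a jf := by rw [← hBsucc]; exact hj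
      linarith
    have hb0n : 0 ≤ B j := Finset.sum_nonneg fun n _ => ha n
    have hb2n : 0 ≤ C := Finset.sum_nonneg fun n _ => ha n
    obtain ⟨α, β, htriz⟩ := tri_phases (B j) (a jf) C hb0n (ha jf)
      (by linarith) (by linarith) (by linarith)
    refine ⟨fun n => if (n : ℕ) < j then 0 else if (n : ℕ) = j then α else β, ?_⟩
    rw [fin_split_sum hjlt (fun n => (a n : ℂ) * Complex.exp (Complex.I *
      ((if (n : ℕ) < j then (0:ℝ) else if (n : ℕ) = j then α else β : ℝ) : ℂ)))]
    have t1 : ∑ n ∈ Finset.univ.filter (fun n : Fin N => (n : ℕ) < j),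
        (a n : ℂ) * Complex.exp (Complex.I *
          ((if (n : ℕ) < j then (0:ℝ) else if (n : ℕ) = j then α else β : ℝ) : ℂ))
        = (B j : ℂ) := by
      rw [show B j = ∑ n ∈ Finset.univ.filter (fun n : Fin N => (n : ℕ) < j), a n from rfl,
        Complex.ofReal_sum]
      apply Finset.sum_congr rfl
      intro n hn
      rw [Finset.mem_filter] at hn
      rw [if_pos hn.2]
      simp
    have t2 : (a (⟨j, hjlt⟩ : Fin N) : ℂ) * Complex.exp (Complex.I *
          ((if ((⟨j, hjlt⟩ : Fin N) : ℕ) < j then (0:ℝ)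
            else if ((⟨j, hjlt⟩ : Fin N) : ℕ) = j then α else β : ℝ) : ℂ))
        = (a jf : ℂ) * Complex.exp (Complex.I * (α : ℂ)) := by
      simp [hjf]
    have t3 : ∑ n ∈ Finset.univ.filter (fun n : Fin N => j < (n : ℕ)),
        (a n : ℂ) * Complex.exp (Complex.I *
          ((if (n : ℕ) < j then (0:ℝ) else if (n : ℕ) = j then α else β : ℝ) : ℂ))
        = (C : ℂ) * Complex.exp (Complex.I * (β : ℂ)) := by
      rw [show C = ∑ n ∈ Finset.univ.filter (fun n : Fin N => j < (n : ℕ)), a n from rfl,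
        Complex.ofReal_sum, Finset.sum_mul]
      apply Finset.sum_congr rfl
      intro n hn
      rw [Finset.mem_filter] at hn
      obtain ⟨-, hn⟩ := hn
      rw [if_neg (by omega), if_neg (by omega)]
    rw [t1, t2, t3]
    exact htriz
end

section
/- Let X be a connected topological space, N ≥ 1, and let g₁, …, g_N : X → ℝ be continuous nonnegative functions with ∑ₙ gₙ(x)² = 1 for every x ∈ X. If each gₙ has a zero (for every n there exists x with gₙ(x) = 0), then there exists a point x_c ∈ X such that gₙ(x_c)² ≤ 1/2 for every n. (Nodes in all overlap amplitudes guarantee the amplitude condition for a dynamical quantum phase transition at some point of the Brillouin zone.) -/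
/-- Nodes in all overlap amplitudes guarantee the amplitude condition for a DQPT
at some point of the Brillouin zone. -/
theorem nodes_imply_amplitude_condition
    (X : Type*) [TopologicalSpace X] [ConnectedSpace X]
    (N : ℕ) (hN : 1 ≤ N) (g : Fin N → X → ℝ)
    (hcont : ∀ n, Continuous (g n))
    (hnonneg : ∀ n x, 0 ≤ g n x)
    (hnorm : ∀ x, ∑ n, (g n x) ^ 2 = 1)
    (hnodes : ∀ n, ∃ x, g n x = 0) :
    ∃ xc : X, ∀ n, (g n xc) ^ 2 ≤ 1 / 2 := by
  by_contra h
  push_neg at h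
  set A : Fin N → Set X := fun n => {x | 1 / 2 < (g n x) ^ 2} with hA
  have hopen : ∀ n, IsOpen (A n) := fun n =>
    isOpen_lt continuous_const ((hcont n).pow 2)
  have hdisj : ∀ x (n m : Fin N), x ∈ A n → x ∈ A m → n = m := by
    intro x n m hn hm
    by_contra hne
    have h1 : (g n x) ^ 2 + (g m x) ^ 2 ≤ ∑ k, (g k x) ^ 2 := by
      have := Finset.sum_le_sum_of_subset_of_nonneg (f := fun k => (g k x) ^ 2)
        (Finset.subset_univ ({n, m} : Finset (Fin N))) (fun k _ _ => sq_nonneg _)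
      rwa [Finset.sum_pair hne] at this
    rw [hnorm x] at h1
    have hn' : (1 : ℝ) / 2 < (g n x) ^ 2 := hn
    have hm' : (1 : ℝ) / 2 < (g m x) ^ 2 := hm
    linarith
  obtain ⟨x0, _⟩ := hnodes ⟨0, hN⟩
  obtain ⟨n0, hn0⟩ := h x0
  have hclosed : IsClosed (A n0) := by
    rw [← isOpen_compl_iff]
    have hcompl : (A n0)ᶜ = ⋃ m ∈ {m : Fin N | m ≠ n0}, A m := by
      ext x
      simp only [Set.mem_compl_iff, Set.mem_iUnion, Set.mem_setOf_eq]
      constructor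
      · intro hx
        obtain ⟨m, hm⟩ := h x
        refine ⟨m, fun hmn => ?_, hm⟩
        exact hx (hmn ▸ hm)
      · rintro ⟨m, hmn, hm⟩ hx
        exact hmn (hdisj x m n0 hm hx)
    rw [hcompl]
    exact isOpen_biUnion fun m _ => hopen m
  have hclopen : IsClopen (A n0) := ⟨hclosed, hopen n0⟩
  rcases isClopen_iff.mp hclopen with hempty | huniv
  · exact Set.eq_empty_iff_forall_notMem.mp hempty x0 hn0
  · obtain ⟨x1, hx1⟩ := hnodes n0
    have : x1 ∈ A n0 := huniv ▸ Set.mem_univ x1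
    have : (1 : ℝ) / 2 < (g n0 x1) ^ 2 := this
    rw [hx1] at this
    norm_num at this
end

section
/- Let X be a connected topological space and N ≥ 1. Let φ₁, …, φ_N : X → ℂ^N be continuous maps such that for every x ∈ X the family (φ₁(x), …, φ_N(x)) is orthonormal (hence an orthonormal basis of ℂ^N), and let ψ : X → ℂ^N be continuous with ‖ψ(x)‖ = 1 for all x. If for every n there exists a point x ∈ X with ⟨φₙ(x), ψ(x)⟩ = 0 (every overlap has a node), then there exists x_c ∈ X such that |⟨φₙ(x_c), ψ(x_c)⟩|² ≤ 1/2 for all n. (If the overlap of the pre-quench band with every post-quench eigenstate has a node in the Brillouin zone, the DQPT amplitude condition is satisfied at some momentum.) -/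
open scoped ComplexInnerProductSpace in
/-- If the overlap of the pre-quench band with every post-quench eigenstate has a
node in the Brillouin zone, the DQPT amplitude condition holds at some momentum. -/
theorem overlap_nodes_imply_amplitude_condition
    (X : Type*) [TopologicalSpace X] [ConnectedSpace X]
    (N : ℕ) (hN : 1 ≤ N)
    (φ : Fin N → X → EuclideanSpace ℂ (Fin N))
    (hφcont : ∀ n, Continuous (φ n))
    (hON : ∀ x : X, Orthonormal ℂ (fun n => φ n x))
    (ψ : X → EuclideanSpace ℂ (Fin N))
    (hψcont : Continuous ψ)
    (hψnorm : ∀ x, ‖ψ x‖ = 1)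
    (hnodes : ∀ n, ∃ x, ⟪φ n x, ψ x⟫ = 0) :
    ∃ xc : X, ∀ n, ‖⟪φ n xc, ψ xc⟫‖ ^ 2 ≤ 1 / 2 := by
  by_contra h
  push_neg at h
  set f : Fin N → X → ℝ := fun n x => ‖⟪φ n x, ψ x⟫‖ ^ 2 with hf
  have hfcont : ∀ n, Continuous (f n) := by
    intro n
    exact ((continuous_norm.comp ((hφcont n).inner hψcont))).pow 2
  -- the sets where f n > 1/2
  set A : Fin N → Set X := fun n => {x | 1 / 2 < f n x} with hA
  have hAopen : ∀ n, IsOpen (A n) := fun n =>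
    isOpen_lt continuous_const (hfcont n)
  -- pairwise disjoint
  have hdisj : ∀ n m : Fin N, n ≠ m → ∀ x, x ∈ A n → x ∉ A m := by
    intro n m hnm x hxn hxm
    have hbessel := (hON x).sum_inner_products_le (s := {n, m}) (ψ x)
    rw [Finset.sum_pair hnm, hψnorm x, one_pow] at hbessel
    have h1 : ‖⟪φ n x, ψ x⟫‖ ^ 2 = f n x := rfl
    have h2 : ‖⟪φ m x, ψ x⟫‖ ^ 2 = f m x := rfl
    rw [h1, h2] at hbessel
    have := hxn.out
    have := hxm.out
    linarith
  -- cover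
  have hcover : ∀ x : X, ∃ n, x ∈ A n := h
  obtain ⟨x₀⟩ : Nonempty X := inferInstance
  obtain ⟨n₀, hx₀⟩ := hcover x₀
  have hclosed : IsClosed (A n₀) := by
    have : (A n₀)ᶜ = ⋃ m ∈ {m : Fin N | m ≠ n₀}, A m := by
      ext x
      simp only [Set.mem_compl_iff, Set.mem_iUnion, Set.mem_setOf_eq]
      constructor
      · intro hx
        obtain ⟨m, hm⟩ := hcover x
        refine ⟨m, fun hmn => hx (hmn ▸ hm), hm⟩
      · rintro ⟨m, hmn, hm⟩ hx
        exact hdisj n₀ m (fun e => hmn e.symm) x hx hm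
    rw [← isOpen_compl_iff, this]
    exact isOpen_biUnion fun m _ => hAopen m
  have huniv : A n₀ = Set.univ :=
    (isClopen_iff.mp ⟨hclosed, hAopen n₀⟩).resolve_left
      (Set.nonempty_iff_ne_empty.mp ⟨x₀, hx₀⟩)
  obtain ⟨x, hx⟩ := hnodes n₀
  have : x ∈ A n₀ := huniv ▸ Set.mem_univ x
  have : 1 / 2 < f n₀ x := this
  rw [hf] at this
  simp only [hx, map_zero] at this
  norm_num at this
end

section
/- Let X be a connected topological space, N ≥ 1, and let g₁, …, g_N : X → ℝ be continuous functions. Suppose there is a point x₀ ∈ X and an index n₁ such that g_{n₁}(x₀) > g_m(x₀) for all m ≠ n₁ (n₁ is the unique strict maximizer at x₀), and a point x₁ ∈ X and index m with g_m(x₁) > g_{n₁}(x₁) (n₁ is not maximal at x₁). Then there exists a point x_c ∈ X and two distinct indices i ≠ j such that g_i(x_c) = g_j(x_c) and g_i(x_c) ≥ g_n(x_c) for all n (the top two ranks switch at x_c: the maximum is attained by at least two indices). -/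
/-- If an index is the unique strict maximizer at one point but fails to be maximal
at another, then somewhere the top two ranks switch: the maximum is attained by at
least two distinct indices. -/
theorem rank_switch_exists
    (X : Type*) [TopologicalSpace X] [ConnectedSpace X]
    (N : ℕ) (hN : 1 ≤ N) (g : Fin N → X → ℝ)
    (hcont : ∀ n, Continuous (g n))
    (x₀ : X) (n₁ : Fin N) (hmax : ∀ m ≠ n₁, g m x₀ < g n₁ x₀)
    (x₁ : X) (m : Fin N) (hswitch : g n₁ x₁ < g m x₁) :
    ∃ (xc : X) (i j : Fin N), i ≠ j ∧ g i xc = g j xc ∧ ∀ n, g n xc ≤ g i xc := by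
  have hmn : m ≠ n₁ := by
    rintro rfl; exact lt_irrefl _ hswitch
  have hne : (Finset.univ.erase n₁).Nonempty :=
    ⟨m, Finset.mem_erase.mpr ⟨hmn, Finset.mem_univ m⟩⟩
  set h : X → ℝ := fun x => (Finset.univ.erase n₁).sup' hne (fun k => g k x) - g n₁ x with hh
  have hcont' : Continuous h := by
    apply Continuous.sub _ (hcont n₁)
    exact Continuous.finset_sup'_apply hne (fun k _ => hcont k)
  have h0 : h x₀ < 0 := by
    have : (Finset.univ.erase n₁).sup' hne (fun k => g k x₀) < g n₁ x₀ := by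
      apply Finset.sup'_lt_iff hne |>.mpr
      intro k hk
      exact hmax k (Finset.mem_erase.mp hk).1
    simpa [hh] using sub_neg.mpr this
  have h1 : 0 < h x₁ := by
    have hle : g m x₁ ≤ (Finset.univ.erase n₁).sup' hne (fun k => g k x₁) :=
      Finset.le_sup' (fun k => g k x₁) (Finset.mem_erase.mpr ⟨hmn, Finset.mem_univ m⟩)
    have : g n₁ x₁ < (Finset.univ.erase n₁).sup' hne (fun k => g k x₁) :=
      lt_of_lt_of_le hswitch hle
    simpa [hh] using sub_pos.mpr this
  have : (0 : ℝ) ∈ Set.Icc (h x₀) (h x₁) := ⟨le_of_lt h0, le_of_lt h1⟩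
  obtain ⟨xc, hxc⟩ := intermediate_value_univ x₀ x₁ hcont' this
  have heq : (Finset.univ.erase n₁).sup' hne (fun k => g k xc) = g n₁ xc := by
    have := sub_eq_zero.mp hxc
    linarith [sub_eq_zero.mp hxc]
  obtain ⟨j, hj, hjmax⟩ := Finset.exists_mem_eq_sup' hne (fun k => g k xc)
  refine ⟨xc, n₁, j, ?_, ?_, ?_⟩
  · exact fun hjn => (Finset.mem_erase.mp hj).1 hjn.symm
  · rw [← heq, hjmax]
  · intro n
    by_cases hn : n = n₁
    · subst hn; exact le_refl _
    · calc g n xc ≤ (Finset.univ.erase n₁).sup' hne (fun k => g k xc) :=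
            Finset.le_sup' (fun k => g k xc) (Finset.mem_erase.mpr ⟨hn, Finset.mem_univ n⟩)
        _ = g n₁ xc := heq
end

section
/- Let n ≥ 1 and let ψ, φ : ℝ → ℝⁿ be continuous maps with ‖ψ(k)‖ = 1 and ‖φ(k)‖ = 1 for all k, such that ψ(k + 2π) = ψ(k) for all k (periodic lift, Berry phase 0) and φ(k + 2π) = −φ(k) for all k (antiperiodic lift, Berry phase π). Then there exists k ∈ [0, 2π] with ⟨φ(k), ψ(k)⟩ = 0. (The overlap of two real Bloch bands with different quantized Berry phases must have at least one node; second part of Theorem 2.) -/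
open scoped RealInnerProductSpace in
/-- The overlap of two real Bloch bands with different quantized Berry phases
(periodic vs antiperiodic continuous unit lifts) must have a node. -/
theorem berry_phase_mismatch_forces_node
    (n : ℕ) (hn : 1 ≤ n)
    (ψ φ : ℝ → EuclideanSpace ℝ (Fin n))
    (hψcont : Continuous ψ) (hφcont : Continuous φ)
    (hψnorm : ∀ k, ‖ψ k‖ = 1) (hφnorm : ∀ k, ‖φ k‖ = 1)
    (hψper : ∀ k, ψ (k + 2 * Real.pi) = ψ k)
    (hφper : ∀ k, φ (k + 2 * Real.pi) = -φ k) :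
    ∃ k ∈ Set.Icc (0 : ℝ) (2 * Real.pi), ⟪φ k, ψ k⟫ = 0 := by
  set f : ℝ → ℝ := fun k => ⟪φ k, ψ k⟫ with hf
  have hcont : Continuous f := hφcont.inner hψcont
  have hflip : f (2 * Real.pi) = -f 0 := by
    have h1 : φ (0 + 2 * Real.pi) = -φ 0 := hφper 0
    have h2 : ψ (0 + 2 * Real.pi) = ψ 0 := hψper 0
    simp only [hf]
    rw [show (2 * Real.pi) = 0 + 2 * Real.pi by ring, h1, h2, inner_neg_left]
  have h0 : (0 : ℝ) ∈ Set.uIcc (f 0) (f (2 * Real.pi)) := by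
    rw [hflip]
    rcases le_total (f 0) 0 with h | h
    · exact Set.mem_uIcc.2 (Or.inl ⟨h, by linarith⟩)
    · exact Set.mem_uIcc.2 (Or.inr ⟨by linarith, h⟩)
  have hle : (0 : ℝ) ≤ 2 * Real.pi := by positivity
  obtain ⟨k, hk, hk0⟩ := intermediate_value_uIcc (a := (0:ℝ)) (b := 2 * Real.pi)
    (hcont.continuousOn) h0
  exact ⟨k, by simpa [Set.uIcc_of_le hle] using hk, hk0⟩
end

section
/- Let n ≥ 1, let ε, ε′ ∈ {+1, −1}, and let ψ, φ : ℝ → ℝⁿ be continuous maps with ‖ψ(k)‖ = 1 and ‖φ(k)‖ = 1 for all k, satisfying ψ(k + 2π) = ε · ψ(k) and φ(k + 2π) = ε′ · φ(k) for all k. If ⟨φ(k), ψ(k)⟩ ≠ 0 for every k ∈ ℝ, then ε = ε′. (If the overlap of two real Bloch bands has no node, their quantized Berry phases coincide.) -/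
lemma sign_flip_contradiction (f : ℝ → ℝ) (hf : Continuous f)
    (h : f (2 * Real.pi) = - f 0) (hnz : ∀ k, f k ≠ 0) : False := by
  rcases lt_or_gt_of_ne (hnz 0) with h0 | h0
  · have hmem : (0 : ℝ) ∈ Set.Icc (f 0) (f (2 * Real.pi)) := ⟨h0.le, by linarith⟩
    obtain ⟨c, hc⟩ := intermediate_value_univ 0 (2 * Real.pi) hf hmem
    exact hnz c hc
  · have hmem : (0 : ℝ) ∈ Set.Icc (f (2 * Real.pi)) (f 0) := ⟨by linarith, h0.le⟩
    obtain ⟨c, hc⟩ := intermediate_value_univ (2 * Real.pi) 0 hf hmem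
    exact hnz c hc

open scoped RealInnerProductSpace in
/-- If the overlap of two real Bloch bands has no node, their quantized Berry
phases (monodromy signs of continuous unit lifts) coincide. -/
theorem nodeless_overlap_equal_berry_phase
    (n : ℕ) (hn : 1 ≤ n) (ε ε' : ℝ)
    (hε : ε = 1 ∨ ε = -1) (hε' : ε' = 1 ∨ ε' = -1)
    (ψ φ : ℝ → EuclideanSpace ℝ (Fin n))
    (hψcont : Continuous ψ) (hφcont : Continuous φ)
    (hψnorm : ∀ k, ‖ψ k‖ = 1) (hφnorm : ∀ k, ‖φ k‖ = 1)
    (hψper : ∀ k, ψ (k + 2 * Real.pi) = ε • ψ k)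
    (hφper : ∀ k, φ (k + 2 * Real.pi) = ε' • φ k)
    (hnodeless : ∀ k : ℝ, ⟪φ k, ψ k⟫ ≠ 0) :
    ε = ε' := by
  set f : ℝ → ℝ := fun k => ⟪φ k, ψ k⟫ with hf
  have hfc : Continuous f := hφcont.inner hψcont
  have hper : ∀ k, f (k + 2 * Real.pi) = (ε * ε') * f k := by
    intro k
    simp only [hf, hψper k, hφper k, real_inner_smul_left, real_inner_smul_right]
    ring
  have key : f (2 * Real.pi) = (ε * ε') * f 0 := by
    have := hper 0; simpa using this
  rcases hε with rfl | rfl <;> rcases hε' with rfl | rfl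
  · rfl
  · exfalso
    exact sign_flip_contradiction f hfc (by rw [key]; ring) hnodeless
  · exfalso
    exact sign_flip_contradiction f hfc (by rw [key]; ring) hnodeless
  · rfl
end

section
/- Let X be a topological space, n ≥ 1, and let ψ, φ : X → ℂⁿ be continuous maps with ψ(x) ≠ 0 and φ(x) ≠ 0 for all x, such that the overlap ⟨φ(x), ψ(x)⟩ ≠ 0 for every x ∈ X. Then ψ is homotopic to a scalar multiple of φ through nowhere-vanishing maps: there exist a continuous map c : X → ℂ with c(x) ≠ 0 for all x, and a continuous map H : X × [0,1] → ℂⁿ with H(x, 0) = ψ(x), H(x, 1) = c(x) · φ(x), and H(x, s) ≠ 0 for all x ∈ X and s ∈ [0,1]. (A nodeless overlap forces the two families of complex lines to be homotopic, which is the topological core of Theorem 1: no node implies equal Chern numbers.) -/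
open scoped ComplexInnerProductSpace unitInterval in
/-- A nodeless overlap forces the two families of nonzero state vectors to be
homotopic through nowhere-vanishing maps, up to a nowhere-vanishing scalar gauge. -/
theorem nodeless_overlap_homotopic
    (X : Type*) [TopologicalSpace X]
    (n : ℕ) (hn : 1 ≤ n)
    (ψ φ : X → EuclideanSpace ℂ (Fin n))
    (hψcont : Continuous ψ) (hφcont : Continuous φ)
    (hψne : ∀ x, ψ x ≠ 0) (hφne : ∀ x, φ x ≠ 0)
    (hoverlap : ∀ x : X, ⟪φ x, ψ x⟫ ≠ 0) :
    ∃ (c : X → ℂ) (H : X × I → EuclideanSpace ℂ (Fin n)),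
      Continuous c ∧ (∀ x, c x ≠ 0) ∧ Continuous H ∧
      (∀ x, H (x, 0) = ψ x) ∧ (∀ x, H (x, 1) = c x • φ x) ∧
      (∀ x s, H (x, s) ≠ 0) := by
  set c : X → ℂ := fun x => ⟪φ x, ψ x⟫ / ((‖φ x‖ : ℂ) ^ 2) with hc
  have hnorm : ∀ x, ((‖φ x‖ : ℂ) ^ 2) ≠ 0 := by
    intro x
    simpa using pow_ne_zero 2 (Complex.ofReal_ne_zero.mpr (norm_ne_zero_iff.mpr (hφne x)))
  have hcne : ∀ x, c x ≠ 0 := fun x => div_ne_zero (hoverlap x) (hnorm x)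
  have hinner_cphi : ∀ x, ⟪φ x, c x • φ x⟫ = ⟪φ x, ψ x⟫ := by
    intro x
    rw [inner_smul_right,
      show (⟪φ x, φ x⟫ : ℂ) = (‖φ x‖ : ℂ) ^ 2 by
        simpa using inner_self_eq_norm_sq_to_K (𝕜 := ℂ) (φ x)]
    exact div_mul_cancel₀ _ (hnorm x)
  set H : X × I → EuclideanSpace ℂ (Fin n) :=
    fun p => ((1 : ℂ) - ((p.2 : ℝ) : ℂ)) • ψ p.1 + ((p.2 : ℝ) : ℂ) • (c p.1 • φ p.1) with hH
  refine ⟨c, H, ?_, hcne, ?_, ?_, ?_, ?_⟩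
  · exact (continuous_inner.comp (hφcont.prodMk hψcont)).div
      ((Complex.continuous_ofReal.comp (hφcont.norm)).pow 2) hnorm
  · apply Continuous.add
    · exact ((continuous_const.sub (Complex.continuous_ofReal.comp
        (continuous_subtype_val.comp continuous_snd))).smul (hψcont.comp continuous_fst))
    · refine (Complex.continuous_ofReal.comp
        (continuous_subtype_val.comp continuous_snd)).smul ?_
      refine Continuous.smul (f := fun p : X × I => c p.1) (g := fun p : X × I => φ p.1) ?_ (hφcont.comp continuous_fst)
      exact (continuous_inner.comp ((hφcont.comp continuous_fst).prodMk
        (hψcont.comp continuous_fst))).div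
        ((Complex.continuous_ofReal.comp ((hφcont.comp continuous_fst).norm)).pow 2)
        (fun p => hnorm p.1)
  · intro x; simp [hH]
  · intro x; simp [hH]
  · intro x s hzero
    have h1 : ⟪φ x, H (x, s)⟫ = ⟪φ x, ψ x⟫ := by
      show ⟪φ x, ((1 : ℂ) - ((s : ℝ) : ℂ)) • ψ x + ((s : ℝ) : ℂ) • (c x • φ x)⟫ = _
      rw [inner_add_right, inner_smul_right, inner_smul_right, hinner_cphi]
      ring
    rw [hzero, inner_zero_right] at h1
    exact hoverlap x h1.symm
end

section
/- Let N ≥ 2, let a₁, …, a_N be nonnegative real numbers with ∑ₙ aₙ = 1 and aₙ ≤ 1/2 for all n, and let E₁, …, E_N be real numbers such that the gaps E₂ − E₁, E₃ − E₁, …, E_N − E₁ are linearly independent over ℚ. Then the return amplitude G(t) = ∑ₙ aₙ · exp(−i Eₙ t) comes arbitrarily close to zero: for every ε > 0 there exists t ∈ ℝ with |∑ₙ aₙ · exp(−i Eₙ t)| < ε. (The amplitude condition together with phase ergodicity drives the Loschmidt amplitude to zero.) -/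
set_option maxHeartbeats 1000000 in

open Complex in
lemma tri_angles (u v w : ℝ) (hu : 0 ≤ u) (hv : 0 ≤ v) (hw : 0 ≤ w)
    (huv : u ≤ v + w) (hvw : v ≤ u + w) (hwu : w ≤ u + v) :
    ∃ y z : ℂ, ‖y‖ = 1 ∧ ‖z‖ = 1 ∧ (u:ℂ) + v*y + w*z = 0 := by
  rcases eq_or_lt_of_le hw with hw0 | hwpos
  · -- w = 0, u = v
    have hw0 : w = 0 := hw0.symm
    have huv' : u = v := le_antisymm (by linarith) (by linarith)
    exact ⟨-1, 1, by simp, by simp, by rw [hw0, huv']; push_cast; ring⟩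
  rcases eq_or_lt_of_le hv with hv0 | hvpos
  · have hv0 : v = 0 := hv0.symm
    have huw : u = w := le_antisymm (by linarith) (by linarith)
    exact ⟨1, -1, by simp, by simp, by rw [hv0, huw]; push_cast; ring⟩
  rcases eq_or_lt_of_le hu with hu0 | hupos
  · have hu0 : u = 0 := hu0.symm
    have hvw' : v = w := le_antisymm (by linarith) (by linarith)
    exact ⟨1, -1, by simp, by simp, by rw [hu0, hvw']; push_cast; ring⟩
  -- main case
  set C : ℝ := (w^2 - u^2 - v^2)/(2*u*v) with hC
  have hC1 : C ≤ 1 := by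
    rw [div_le_one (by positivity)]; nlinarith
  have hCm1 : -1 ≤ C := by
    rw [le_div_iff₀ (by positivity)] <;> nlinarith
  set S : ℝ := Real.sqrt (1 - C^2) with hS
  have hS0 : 0 ≤ S := Real.sqrt_nonneg _
  have hCS : C^2 + S^2 = 1 := by
    rw [hS, Real.sq_sqrt (by nlinarith)]; ring
  set y : ℂ := (C:ℂ) + (S:ℂ)*Complex.I with hy
  have hyabs : ‖y‖ = 1 := by
    rw [hy, Complex.norm_add_mul_I]
    rw [show C^2 + S^2 = 1 from hCS, Real.sqrt_one]
  have hkey : ‖(u:ℂ) + v*y‖ = w := by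
    have : (u:ℂ) + v*y = ((u + v*C : ℝ):ℂ) + ((v*S : ℝ):ℂ)*Complex.I := by
      rw [hy]; push_cast; ring
    rw [this, Complex.norm_add_mul_I]
    have : (u + v*C)^2 + (v*S)^2 = w^2 := by
      have h2 : 2*u*v*C = w^2 - u^2 - v^2 := by
        rw [hC]; field_simp
      nlinarith [hCS]
    rw [this, Real.sqrt_sq hw]
  refine ⟨y, -((u:ℂ) + v*y)/w, hyabs, ?_, ?_⟩
  · rw [norm_div, norm_neg, hkey]
    rw [Complex.norm_real, Real.norm_eq_abs, _root_.abs_of_nonneg hw, div_self (ne_of_gt hwpos)]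
  · have hwne : (w:ℂ) ≠ 0 := by exact_mod_cast ne_of_gt hwpos
    field_simp
    ring



lemma polygon_zero (N : ℕ) (a : Fin N → ℝ)
    (ha : ∀ n, 0 ≤ a n) (hsum : ∑ n, a n = 1) (hhalf : ∀ n, a n ≤ 1 / 2) :
    ∃ W : Fin N → ℂ, (∀ n, ‖W n‖ = 1) ∧ ∑ n, (a n : ℂ) * W n = 0 := by
  classical
  set S : ℕ → ℝ := fun j => ∑ n ∈ Finset.univ.filter (fun n : Fin N => (n:ℕ) < j), a n with hSdef
  have hS0 : S 0 = 0 := by simp [hSdef]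
  have hSN : S N = 1 := by
    rw [hSdef, ← hsum]
    simp only []
    apply Finset.sum_congr _ (fun _ _ => rfl)
    ext n; simp [n.isLt]
  set P : ℕ → Prop := fun j => S j ≤ 1/2 with hPdef
  have hP0 : P 0 := by rw [hPdef]; simp [hS0]
  set j : ℕ := Nat.findGreatest P N with hj
  have hjle : j ≤ N := Nat.findGreatest_le N
  have hPj : P j := Nat.findGreatest_spec (Nat.zero_le N) hP0
  have hjN : j < N := by
    rcases lt_or_eq_of_le hjle with h | h
    · exact h
    · exfalso
      have : P N := h ▸ hPj
      rw [hPdef] at this; rw [hSN] at this; norm_num at this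
  have hPj1 : ¬ P (j+1) := Nat.findGreatest_is_greatest (Nat.lt_succ_self j) (by omega)
  -- the three parts
  set u : ℝ := S j with hu
  set v : ℝ := a ⟨j, hjN⟩ with hv
  set w : ℝ := 1 - S (j+1) with hw
  have hsplit : S (j+1) = S j + v := by
    rw [hSdef]
    simp only []
    have : Finset.univ.filter (fun n : Fin N => (n:ℕ) < j + 1)
        = insert (⟨j, hjN⟩ : Fin N) (Finset.univ.filter (fun n : Fin N => (n:ℕ) < j)) := by
      ext n
      simp only [Finset.mem_filter, Finset.mem_univ, true_and, Finset.mem_insert]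
      constructor
      · intro h
        rcases Nat.lt_succ_iff_lt_or_eq.mp h with h | h
        · exact Or.inr h
        · exact Or.inl (by exact Fin.ext h)
      · rintro (h | h)
        · rw [h]; simp
        · omega
    rw [this, Finset.sum_insert (by simp)]
    rw [hv]; ring
  have hu0 : 0 ≤ u := Finset.sum_nonneg (fun n _ => ha n)
  have hv0 : 0 ≤ v := ha _
  have hw0 : 0 ≤ w := by
    rw [hw, hSdef, ← hsum]
    have := Finset.sum_le_sum_of_subset_of_nonneg
      (Finset.filter_subset (fun n : Fin N => (n:ℕ) < j+1) Finset.univ)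
      (fun n _ _ => ha n)
    linarith
  have huvw : u + v + w = 1 := by rw [hw, hsplit, hu]; ring
  have hu2 : u ≤ 1/2 := hPj
  have hv2 : v ≤ 1/2 := hhalf _
  have hw2 : w ≤ 1/2 := by
    have : ¬ (S (j+1) ≤ 1/2) := hPj1
    rw [hw]; linarith [not_le.mp this]
  obtain ⟨y, z, hy1, hz1, hyz⟩ := tri_angles u v w hu0 hv0 hw0
    (by linarith) (by linarith) (by linarith)
  refine ⟨fun n => if (n:ℕ) < j then 1 else if (n:ℕ) = j then y else z, ?_, ?_⟩
  · intro n
    dsimp only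
    split_ifs <;> simp [hy1, hz1]
  · rw [← hyz]
    rw [← Finset.sum_filter_add_sum_filter_not Finset.univ (fun n : Fin N => (n:ℕ) < j)]
    rw [← Finset.sum_filter_add_sum_filter_not
      (Finset.univ.filter (fun n : Fin N => ¬ (n:ℕ) < j)) (fun n : Fin N => (n:ℕ) = j)]
    have e1 : ∑ n ∈ Finset.univ.filter (fun n : Fin N => (n:ℕ) < j),
        (a n : ℂ) * (if (n:ℕ) < j then 1 else if (n:ℕ) = j then y else z) = (u:ℂ) := by
      rw [hu, hSdef]; push_cast [Finset.sum_filter]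
      apply Finset.sum_congr rfl
      intro n _
      split_ifs <;> simp
    have e2 : ∑ n ∈ (Finset.univ.filter (fun n : Fin N => ¬ (n:ℕ) < j)).filter
        (fun n : Fin N => (n:ℕ) = j),
        (a n : ℂ) * (if (n:ℕ) < j then 1 else if (n:ℕ) = j then y else z) = (v:ℂ) * y := by
      have hset : (Finset.univ.filter (fun n : Fin N => ¬ (n:ℕ) < j)).filter
          (fun n : Fin N => (n:ℕ) = j) = {(⟨j, hjN⟩ : Fin N)} := by
        ext n
        simp only [Finset.mem_filter, Finset.mem_univ, true_and, Finset.mem_singleton]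
        constructor
        · rintro ⟨h1, h2⟩; exact Fin.ext h2
        · intro h; rw [h]; simp
      rw [hset, Finset.sum_singleton]
      simp [hv]
    have e3 : ∑ n ∈ (Finset.univ.filter (fun n : Fin N => ¬ (n:ℕ) < j)).filter
        (fun n : Fin N => ¬ (n:ℕ) = j),
        (a n : ℂ) * (if (n:ℕ) < j then 1 else if (n:ℕ) = j then y else z) = (w:ℂ) * z := by
      have : ∀ n ∈ (Finset.univ.filter (fun n : Fin N => ¬ (n:ℕ) < j)).filter
          (fun n : Fin N => ¬ (n:ℕ) = j),
          (a n : ℂ) * (if (n:ℕ) < j then 1 else if (n:ℕ) = j then y else z) = (a n : ℂ) * z := by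
        intro n hn
        simp only [Finset.mem_filter] at hn
        rw [if_neg hn.1.2, if_neg hn.2]
      rw [Finset.sum_congr rfl this, ← Finset.sum_mul]
      congr 1
      have hwsum : w = ∑ n ∈ (Finset.univ.filter (fun n : Fin N => ¬ (n:ℕ) < j)).filter
          (fun n : Fin N => ¬ (n:ℕ) = j), a n := by
        have hpart : ∑ n ∈ Finset.univ.filter (fun n : Fin N => (n:ℕ) < j + 1), a n
            + ∑ n ∈ Finset.univ.filter (fun n : Fin N => ¬ (n:ℕ) < j + 1), a n = 1 := by
          rw [Finset.sum_filter_add_sum_filter_not, hsum]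
        have hseteq : Finset.univ.filter (fun n : Fin N => ¬ (n:ℕ) < j + 1)
            = (Finset.univ.filter (fun n : Fin N => ¬ (n:ℕ) < j)).filter
              (fun n : Fin N => ¬ (n:ℕ) = j) := by
          ext n
          simp only [Finset.mem_filter, Finset.mem_univ, true_and]
          omega
        rw [hw, hSdef]
        rw [← hseteq] at *
        linarith [hpart]
      rw [hwsum]; push_cast; rfl
    rw [e1, e2, e3]; ring


open Complex intervalIntegral in
lemma trig_sum_integral_bound {α : Type*} [DecidableEq α] (s : Finset α)
    (c : α → ℂ) (lam : α → ℝ) :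
    ∃ M : ℝ, ∀ T : ℝ, 0 ≤ T →
      ‖(∫ t in (0:ℝ)..T, ∑ p ∈ s, c p * Complex.exp (Complex.I * (lam p) * t))
        - (∑ p ∈ s.filter (fun p => lam p = 0), c p) * T‖ ≤ M := by
  classical
  refine ⟨∑ p ∈ s.filter (fun p => ¬ lam p = 0), 2 * ‖c p‖ / |lam p|, fun T hT => ?_⟩
  have hint : ∀ p ∈ s, IntervalIntegrable
      (fun t : ℝ => c p * Complex.exp (Complex.I * (lam p) * t)) MeasureTheory.volume 0 T := by
    intro p _
    apply Continuous.intervalIntegrable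
    continuity
  rw [intervalIntegral.integral_finset_sum hint]
  have key : ∀ p ∈ s, (∫ t in (0:ℝ)..T, c p * Complex.exp (Complex.I * (lam p) * t))
      = if lam p = 0 then c p * T else
        c p * ((Complex.exp (Complex.I * lam p * T) - 1) / (Complex.I * lam p)) := by
    intro p _
    rw [intervalIntegral.integral_const_mul]
    split_ifs with h
    · simp [h]
    · have hne : Complex.I * (lam p) ≠ 0 := by
        simp [Complex.I_ne_zero, Complex.ofReal_eq_zero, h]
      have : ∀ t : ℝ, Complex.I * (lam p) * t = (Complex.I * lam p) * t := fun t => by ring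
      rw [show (fun t : ℝ => Complex.exp (Complex.I * (lam p) * t))
          = (fun t : ℝ => Complex.exp ((Complex.I * lam p) * t)) from rfl]
      rw [integral_exp_mul_complex hne]
      simp [mul_zero, Complex.exp_zero]
  rw [Finset.sum_congr rfl key]
  rw [Finset.sum_ite]
  have h1 : ∑ p ∈ s.filter (fun p => lam p = 0), c p * T
      = (∑ p ∈ s.filter (fun p => lam p = 0), c p) * T := by rw [Finset.sum_mul]
  rw [h1, add_sub_cancel_left]
  refine (norm_sum_le _ _).trans (Finset.sum_le_sum ?_)
  intro p hp
  simp only [Finset.mem_filter] at hp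
  rw [norm_mul, norm_div]
  have h2 : ‖Complex.exp (Complex.I * lam p * T) - 1‖ ≤ 2 := by
    refine (norm_sub_le _ _).trans ?_
    have : ‖Complex.exp (Complex.I * lam p * T)‖ = 1 := by
      rw [Complex.norm_exp]
      simp [mul_comm, mul_assoc]
    rw [this]; norm_num
  have h3 : ‖Complex.I * (lam p : ℂ)‖ = |lam p| := by
    rw [norm_mul, Complex.norm_I, one_mul, Complex.norm_real,
      Real.norm_eq_abs]
  rw [h3]
  have hlp : (0:ℝ) < |lam p| := abs_pos.mpr hp.2
  rw [mul_div_assoc']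
  refine div_le_div_of_nonneg_right ?_ hlp.le
  nlinarith [norm_nonneg (c p), h2]


open Complex Finset in
lemma factor_expand (m : ℕ) (om : ℝ) (w : ℂ) (hw : ‖w‖ = 1) (t : ℝ) :
    ((((1 + (Complex.exp (-Complex.I * om * t) * (starRingEnd ℂ) w).re)/2)^m : ℝ) : ℂ)
     = ∑ jj ∈ Finset.range (m+1) ×ˢ Finset.range (m+1),
        ((m.choose jj.1 : ℂ) * (m.choose jj.2) * ((starRingEnd ℂ) w)^jj.1 * w^jj.2 / 4^m)
          * Complex.exp (Complex.I * ((((jj.2:ℝ) - jj.1) * om : ℝ)) * t) := by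
  set u : ℂ := Complex.exp (-Complex.I * om * t) * (starRingEnd ℂ) w with hu
  have habs : ‖u‖ = 1 := by
    rw [hu, norm_mul, Complex.norm_conj, hw, mul_one]
    rw [Complex.norm_exp]
    simp [mul_comm, mul_assoc]
  have hnsq : Complex.normSq u = 1 := by
    have := Complex.sq_norm u
    rw [habs] at this; simpa using this.symm
  have hconj : (starRingEnd ℂ) u = Complex.exp (Complex.I * om * t) * w := by
    rw [hu, map_mul, ← Complex.exp_conj]
    simp only [map_mul, map_neg, Complex.conj_I, Complex.conj_ofReal, RingHomCompTriple.comp_apply,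
      RingHom.id_apply]
    ring_nf
  clear_value u
  have h1 : (1 + u) * (1 + (starRingEnd ℂ) u) = ((2 * (1 + u.re) : ℝ) : ℂ) := by
    have hc := Complex.mul_conj u
    have hadd := Complex.add_conj u
    calc (1+u)*(1+(starRingEnd ℂ) u) = 1 + (u + (starRingEnd ℂ) u) + u * (starRingEnd ℂ) u := by
          ring
    _ = 1 + ((2*u.re:ℝ):ℂ) + ((Complex.normSq u : ℝ):ℂ) := by rw [hadd, hc]
    _ = _ := by rw [hnsq]; push_cast; ring
  have stepA : ((((1 + u.re)/2)^m : ℝ) : ℂ) = ((1 + u)^m * (1 + (starRingEnd ℂ) u)^m)/4^m := by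
    have h2 : ((2*(1+u.re):ℝ):ℂ) = ((((1+u.re)/2 :ℝ)):ℂ) * 4 := by push_cast; ring
    rw [← mul_pow, h1, h2, mul_pow, mul_div_assoc, div_self (pow_ne_zero _ (by norm_num : (4:ℂ) ≠ 0)),
      mul_one]
    norm_cast
  rw [stepA]
  have hpow1 : (1 + u)^m = ∑ j ∈ range (m+1), u^j * (m.choose j : ℂ) := by
    rw [add_comm, add_pow]
    apply Finset.sum_congr rfl
    intro j _; rw [one_pow, mul_one]
  have hpow2 : (1 + (starRingEnd ℂ) u)^m
      = ∑ j ∈ range (m+1), ((starRingEnd ℂ) u)^j * (m.choose j : ℂ) := by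
    rw [add_comm, add_pow]
    apply Finset.sum_congr rfl
    intro j _; rw [one_pow, mul_one]
  rw [hpow1, hpow2, Finset.sum_mul_sum, ← Finset.sum_product']
  rw [Finset.sum_div]
  apply Finset.sum_congr rfl
  rintro ⟨j, j'⟩ hjj
  simp only
  rw [hconj, hu]
  rw [mul_pow, mul_pow]
  have e1 : Complex.exp (-Complex.I * om * t) ^ j = Complex.exp (-((j:ℂ)) * (Complex.I * om * t)) := by
    rw [← Complex.exp_nat_mul]
    ring_nf
  have e2 : Complex.exp (Complex.I * om * t) ^ j' = Complex.exp ((j':ℂ) * (Complex.I * om * t)) := by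
    rw [← Complex.exp_nat_mul]
  have e3 : Complex.exp (-((j:ℂ)) * (Complex.I * om * t)) * Complex.exp ((j':ℂ) * (Complex.I * om * t))
      = Complex.exp (Complex.I * ((((j':ℝ) - j) * om : ℝ)) * t) := by
    rw [← Complex.exp_add]
    congr 1
    push_cast
    ring
  rw [e1, e2, ← e3]
  ring


lemma exists_good_m (K : ℕ) (δ : ℝ) (hδ : 0 < δ) (hδ2 : δ ≤ 1/2) :
    ∃ m : ℕ, 1 ≤ m ∧ 2 * ((m:ℝ)+1)^K * (1-δ)^m ≤ 1 := by
  have hr : ‖(1-δ : ℝ)‖ < 1 := by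
    rw [Real.norm_eq_abs, abs_of_nonneg (by linarith)]; linarith
  have h0 : Filter.Tendsto (fun n : ℕ => ((n:ℝ))^K * (1-δ)^n) Filter.atTop (nhds 0) :=
    (summable_pow_mul_geometric_of_norm_lt_one K hr).tendsto_atTop_zero
  have h1 : Filter.Tendsto (fun m : ℕ => (((m+1:ℕ):ℝ))^K * (1-δ)^(m+1)) Filter.atTop (nhds 0) :=
    h0.comp (Filter.tendsto_add_atTop_nat 1)
  have hrpos : (0:ℝ) < 1 - δ := by linarith
  have h2 : Filter.Tendsto (fun m : ℕ => 2 * ((m:ℝ)+1)^K * (1-δ)^m) Filter.atTop (nhds 0) := by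
    have := h1.const_mul (2 / (1-δ))
    rw [mul_zero] at this
    refine this.congr (fun m => ?_)
    push_cast
    rw [pow_succ]
    field_simp
  have h3 := h2.eventually_le_const (by norm_num : (0:ℝ) < 1)
  obtain ⟨m, hm⟩ := (h3.and (Filter.eventually_ge_atTop 1)).exists
  exact ⟨m, hm.2, hm.1⟩

lemma sum_split_ne {α β : Type*} [Fintype α] [DecidableEq α] [AddCommMonoid β]
    (a : α) (f : α → β) :
    ∑ n, f n = f a + ∑ n : {n : α // n ≠ a}, f n.1 := by
  rw [Fintype.sum_eq_add_sum_compl a f]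
  congr 1
  rw [← Finset.sum_subtype (Finset.univ.filter (fun n => n ≠ a))
    (by intro x; simp) f]
  congr 1
  ext n; simp


set_option maxHeartbeats 1000000 in
/-- The amplitude condition together with phase ergodicity (rationally independent
gaps) drives the Loschmidt return amplitude arbitrarily close to zero. -/
theorem return_amplitude_near_zero
    (N : ℕ) (hN : 2 ≤ N) (a : Fin N → ℝ)
    (ha : ∀ n, 0 ≤ a n) (hsum : ∑ n, a n = 1) (hhalf : ∀ n, a n ≤ 1 / 2)
    (E : Fin N → ℝ)
    (hindep : LinearIndependent ℚ
      (fun n : {n : Fin N // n ≠ ⟨0, by omega⟩} => E n.1 - E ⟨0, by omega⟩)) :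
    ∀ ε > 0, ∃ t : ℝ,
      ‖∑ n, (a n : ℂ) * Complex.exp (-Complex.I * (E n : ℂ) * (t : ℂ))‖ < ε := by
  classical
  intro ε hε
  set n0 : Fin N := ⟨0, by omega⟩ with hn0
  set ι := {n : Fin N // n ≠ n0} with hι
  set om : ι → ℝ := fun n => E n.1 - E n0 with hom
  -- integer independence
  have hZ : ∀ c : ι → ℤ, ∑ n : ι, (c n : ℝ) * om n = 0 → ∀ n, c n = 0 := by
    intro c hc n
    have h1 := Fintype.linearIndependent_iff.mp hindep (fun n => (c n : ℚ))
    have h2 : ∑ n : ι, ((c n : ℚ)) • (E n.1 - E n0) = 0 := by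
      rw [← hc]
      apply Finset.sum_congr rfl
      intro k _
      rw [Rat.smul_def]
      push_cast
      rfl
    exact_mod_cast h1 h2 n
  -- target phases
  obtain ⟨W, hWabs, hWsum⟩ := polygon_zero N a ha hsum hhalf
  have hWn0 : W n0 ≠ 0 := by
    intro h
    have := hWabs n0
    rw [h] at this
    simp at this
  set w : Fin N → ℂ := fun n => W n * (W n0)⁻¹ with hwdef
  have hwabs : ∀ n, ‖w n‖ = 1 := by
    intro n
    rw [hwdef]
    simp only [norm_mul, norm_inv, hWabs]
    norm_num
  have hw0 : w n0 = 1 := by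
    rw [hwdef]
    exact mul_inv_cancel₀ hWn0
  have hwsum : ∑ n, (a n : ℂ) * w n = 0 := by
    rw [hwdef]
    simp only [← mul_assoc, ← Finset.sum_mul]
    rw [hWsum, zero_mul]
  have hwsumι : ∑ n : ι, (a n.1 : ℂ) * w n.1 = -(a n0 : ℂ) := by
    have := sum_split_ne n0 (fun n => (a n : ℂ) * w n)
    rw [hwsum, hw0, mul_one] at this
    linear_combination -this
  -- parameters
  set δ : ℝ := min (ε^2/8) (1/2) with hδdef
  have hδpos : 0 < δ := lt_min (by positivity) (by norm_num)
  have hδhalf : δ ≤ 1/2 := min_le_right _ _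
  set K := Fintype.card ι with hK
  obtain ⟨m, hm1, hmK⟩ := exists_good_m K δ hδpos hδhalf
  -- the kernel function
  set u : ι → ℝ → ℂ := fun n t => Complex.exp (-Complex.I * om n * t) * (starRingEnd ℂ) (w n.1)
    with hudef
  set P : ℝ → ℝ := fun t => ∏ n : ι, ((1 + (u n t).re)/2)^m with hPdef
  set S : Finset (ι → ℕ × ℕ) :=
    Fintype.piFinset (fun _ : ι => Finset.range (m+1) ×ˢ Finset.range (m+1)) with hS
  set c : (ι → ℕ × ℕ) → ℂ := fun p => ∏ n : ι,
    ((m.choose (p n).1 : ℂ) * (m.choose (p n).2)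
      * ((starRingEnd ℂ) (w n.1))^(p n).1 * (w n.1)^(p n).2 / 4^m) with hc
  set lam : (ι → ℕ × ℕ) → ℝ := fun p => ∑ n : ι, (((p n).2:ℝ) - (p n).1) * om n with hlam
  have claim1 : ∀ t : ℝ, ((P t : ℝ) : ℂ) = ∑ p ∈ S, c p * Complex.exp (Complex.I * lam p * t) := by
    intro t
    have h0 : ((P t : ℝ):ℂ) = ∏ n : ι, ((((1 + (u n t).re)/2)^m : ℝ) : ℂ) := by
      rw [hPdef]; push_cast; rfl
    rw [h0]
    have h1 : ∀ n : ι, ((((1 + (u n t).re)/2)^m : ℝ) : ℂ)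
        = ∑ jj ∈ Finset.range (m+1) ×ˢ Finset.range (m+1),
          ((m.choose jj.1 : ℂ) * (m.choose jj.2) * ((starRingEnd ℂ) (w n.1))^jj.1
              * (w n.1)^jj.2 / 4^m)
            * Complex.exp (Complex.I * ((((jj.2:ℝ) - jj.1) * om n : ℝ)) * t) :=
      fun n => factor_expand m (om n) (w n.1) (hwabs n.1) t
    rw [Finset.prod_congr rfl (fun n _ => h1 n)]
    rw [Finset.prod_univ_sum]
    apply Finset.sum_congr rfl
    intro p hp
    rw [Finset.prod_mul_distrib]
    congr 1
    rw [← Complex.exp_sum]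
    congr 1
    rw [hlam]
    push_cast
    rw [Finset.mul_sum, Finset.sum_mul]
  have claim3 : ∃ qr : ℝ, (∑ p ∈ S.filter (fun p => lam p = 0), c p) = ((qr : ℝ) : ℂ)
      ∧ ((1/(m+1) : ℝ))^K ≤ qr := by
    refine ⟨(∑ j ∈ Finset.range (m+1), ((m.choose j:ℝ))^2 / 4^m)^K, ?_, ?_⟩
    · have hbij : ∑ p ∈ S.filter (fun p => lam p = 0), c p
          = ∑ f ∈ Fintype.piFinset (fun _ : ι => Finset.range (m+1)),
              ∏ n : ι, (((m.choose (f n) : ℂ))^2 / 4^m) := by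
        apply Finset.sum_nbij' (i := fun p => fun n : ι => (p n).1)
          (j := fun f => fun n : ι => ((f n, f n) : ℕ × ℕ))
        · -- hi
          intro p hp
          rw [Finset.mem_filter, hS, Fintype.mem_piFinset] at hp
          rw [Fintype.mem_piFinset]
          intro n
          exact (Finset.mem_product.mp (hp.1 n)).1
        · -- hj
          intro f hf
          rw [Fintype.mem_piFinset] at hf
          rw [Finset.mem_filter]
          constructor
          · rw [hS, Fintype.mem_piFinset]
            intro n
            exact Finset.mem_product.mpr ⟨hf n, hf n⟩
          · rw [hlam]
            simp
        · -- left inverse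
          intro p hp
          rw [Finset.mem_filter] at hp
          have hdiag : ∀ n : ι, (p n).1 = (p n).2 := by
            have h0 := hp.2
            rw [hlam] at h0
            have := hZ (fun n => ((p n).2 : ℤ) - ((p n).1 : ℤ)) (by push_cast; exact h0)
            intro n
            have h9 : ((p n).2 : ℤ) - ((p n).1 : ℤ) = 0 := this n
            omega
          funext n
          exact Prod.ext rfl (hdiag n)
        · -- right inverse
          intro f hf
          rfl
        · -- values
          intro p hp
          rw [Finset.mem_filter] at hp
          have hdiag : ∀ n : ι, (p n).1 = (p n).2 := by
            have h0 := hp.2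
            rw [hlam] at h0
            have := hZ (fun n => ((p n).2 : ℤ) - ((p n).1 : ℤ)) (by push_cast; exact h0)
            intro n
            have h9 : ((p n).2 : ℤ) - ((p n).1 : ℤ) = 0 := this n
            omega
          rw [hc]
          apply Finset.prod_congr rfl
          intro n _
          rw [← hdiag n]
          have hww : (starRingEnd ℂ) (w n.1) * w n.1 = 1 := by
            rw [mul_comm, Complex.mul_conj]
            have := Complex.sq_norm (w n.1); rw [hwabs] at this
            rw [show Complex.normSq (w n.1) = 1 from by simpa using this.symm]
            norm_num
          have : ((starRingEnd ℂ) (w n.1))^(p n).1 * (w n.1)^(p n).1 = 1 := by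
            rw [← mul_pow, hww, one_pow]
          field_simp
          linear_combination ((m.choose (p n).1 : ℂ))^2 * this
      rw [hbij,
        Finset.sum_prod_piFinset (Finset.range (m+1))
          (fun (_ : ι) (j : ℕ) => ((m.choose j : ℂ))^2 / 4^m)]
      rw [Finset.prod_const]
      rw [Finset.card_univ, ← hK]
      push_cast
      rfl
    · apply pow_le_pow_left₀ (by positivity)
      rw [← Finset.sum_div]
      rw [div_le_div_iff₀ (by positivity) (by positivity)]
      have cs := sq_sum_le_card_mul_sum_sq (s := Finset.range (m+1))
        (f := fun j => (m.choose j : ℝ))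
      have hch : ∑ j ∈ Finset.range (m+1), (m.choose j : ℝ) = 2^m := by
        rw [← Nat.cast_sum]
        rw [Nat.sum_range_choose]
        push_cast
        rfl
      rw [hch] at cs
      simp only [Finset.card_range] at cs
      have h4 : ((2:ℝ)^m)^2 = 4^m := by
        rw [← pow_mul, show (4:ℝ) = 2^2 from by norm_num, ← pow_mul]
        ring_nf
      rw [h4] at cs
      push_cast at cs ⊢
      nlinarith [cs]
  obtain ⟨qr, hqr, hqrge⟩ := claim3
  have hqrpos : 0 < qr := lt_of_lt_of_le (by positivity) hqrge
  have hδm : (1-δ)^m ≤ qr/2 := by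
    have h1 : ((1/(m+1):ℝ))^K = ((m:ℝ)+1)⁻¹^K := by norm_num
    have h2 : (1-δ)^m ≤ 1/(2*((m:ℝ)+1)^K) := by
      rw [le_div_iff₀ (by positivity)]
      calc (1-δ)^m * (2*((m:ℝ)+1)^K) = 2 * ((m:ℝ)+1)^K * (1-δ)^m := by ring
        _ ≤ 1 := hmK
    calc (1-δ)^m ≤ 1/(2*((m:ℝ)+1)^K) := h2
      _ = ((1/(m+1):ℝ))^K / 2 := by rw [div_pow]; push_cast; ring
      _ ≤ qr/2 := by linarith
  obtain ⟨M, hM⟩ := trig_sum_integral_bound S c lam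
  have hM0 : 0 ≤ M := by
    exact le_trans (norm_nonneg _) (hM 0 le_rfl)
  -- find good time
  have claim5 : ∃ t : ℝ, qr/2 ≤ P t := by
    by_contra hcon
    push_neg at hcon
    have hu_cont : ∀ n : ι, Continuous (fun s : ℝ => u n s) := by
      intro n
      apply Continuous.mul _ continuous_const
      exact Complex.continuous_exp.comp (continuous_const.mul Complex.continuous_ofReal)
    have hcont : Continuous P := by
      rw [hPdef]
      apply continuous_finset_prod
      intro n _
      exact ((continuous_const.add (Complex.continuous_re.comp (hu_cont n))).div_const 2).pow m
    set T : ℝ := (2*M+2)/qr with hT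
    have hTpos : 0 < T := by positivity
    have hint : ∫ t in (0:ℝ)..T, P t ≤ (qr/2) * T := by
      have h1 := intervalIntegral.integral_mono_on (μ := MeasureTheory.volume) hTpos.le
        (hcont.intervalIntegrable 0 T) (intervalIntegrable_const (c := qr/2))
        (fun x _ => (hcon x).le)
      rw [intervalIntegral.integral_const] at h1
      rw [smul_eq_mul] at h1
      calc ∫ t in (0:ℝ)..T, P t ≤ (T - 0) * (qr/2) := h1
        _ = (qr/2) * T := by ring
    have h2 := hM T hTpos.le
    have h3 : (∫ t in (0:ℝ)..T, ∑ p ∈ S, c p * Complex.exp (Complex.I * lam p * t))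
        = ((∫ t in (0:ℝ)..T, P t : ℝ) : ℂ) := by
      rw [← intervalIntegral.integral_ofReal]
      apply intervalIntegral.integral_congr
      intro t _
      exact (claim1 t).symm
    rw [h3, hqr] at h2
    have h4 : |(∫ t in (0:ℝ)..T, P t) - qr * T| ≤ M := by
      have : (((∫ t in (0:ℝ)..T, P t : ℝ) : ℂ) - (qr:ℂ) * T)
          = (((∫ t in (0:ℝ)..T, P t) - qr * T : ℝ) : ℂ) := by push_cast; ring
      rw [this] at h2
      rwa [Complex.norm_real, Real.norm_eq_abs] at h2
    have h5 : qr * T - M ≤ ∫ t in (0:ℝ)..T, P t := by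
      have := abs_le.mp h4
      linarith [this.1]
    have h6 : (qr/2) * T ≤ M := by linarith
    rw [hT] at h6
    have : qr/2 * ((2*M+2)/qr) = M + 1 := by field_simp
    rw [this] at h6
    linarith
  obtain ⟨t, ht⟩ := claim5
  -- extract phase closeness
  have hFbounds : ∀ n : ι, 0 ≤ (1 + (u n t).re)/2 ∧ (1 + (u n t).re)/2 ≤ 1 := by
    intro n
    have habs : ‖u n t‖ = 1 := by
      rw [hudef]
      simp only [norm_mul, Complex.norm_conj, hwabs, mul_one, Complex.norm_exp]
      simp [mul_comm, mul_assoc]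
    have hre := Complex.abs_re_le_norm (u n t)
    rw [habs] at hre
    have := abs_le.mp hre
    constructor <;> [linarith [this.1]; linarith [this.2]]
  have hclose : ∀ n : ι, ‖Complex.exp (-Complex.I * om n * t) - w n.1‖
      ≤ 2 * Real.sqrt δ := by
    intro n
    -- single factor bound
    have hfac : (1-δ)^m ≤ ((1 + (u n t).re)/2)^m := by
      have hP : P t = ((1 + (u n t).re)/2)^m * ∏ k ∈ Finset.univ.erase n, ((1 + (u k t).re)/2)^m := by
        rw [hPdef]
        exact (Finset.mul_prod_erase Finset.univ _ (Finset.mem_univ n)).symm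
      have hrest : ∏ k ∈ Finset.univ.erase n, ((1 + (u k t).re)/2)^m ≤ 1 :=
        Finset.prod_le_one (fun k _ => pow_nonneg (hFbounds k).1 m)
          (fun k _ => pow_le_one₀ (hFbounds k).1 (hFbounds k).2)
      have h1 : qr/2 ≤ ((1 + (u n t).re)/2)^m := by
        calc qr/2 ≤ P t := ht
          _ ≤ ((1 + (u n t).re)/2)^m * 1 := by
              rw [hP]
              apply mul_le_mul_of_nonneg_left hrest (pow_nonneg (hFbounds n).1 m)
          _ = ((1 + (u n t).re)/2)^m := by ring
      linarith
    have hF : 1 - δ ≤ (1 + (u n t).re)/2 := by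
      have := (pow_le_pow_iff_left₀ (by linarith : (0:ℝ) ≤ 1-δ) (hFbounds n).1
        (by omega : m ≠ 0)).mp hfac
      exact this
    have hreu : 1 - 2*δ ≤ (u n t).re := by linarith
    have habs : ‖u n t‖ = 1 := by
      rw [hudef]
      simp only [norm_mul, Complex.norm_conj, hwabs, mul_one, Complex.norm_exp]
      simp [mul_comm, mul_assoc]
    have hnsq : Complex.normSq (u n t) = 1 := by
      have := Complex.sq_norm (u n t); rw [habs] at this; simpa using this.symm
    have hd2 : ‖u n t - 1‖^2 ≤ 4*δ := by
      rw [Complex.sq_norm]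
      have hns : Complex.normSq (u n t - 1) = Complex.normSq (u n t) - 2*(u n t).re + 1 := by
        simp only [Complex.normSq_apply, Complex.sub_re, Complex.sub_im, Complex.one_re,
          Complex.one_im]
        ring
      rw [hns, hnsq]
      linarith
    have hd : ‖u n t - 1‖ ≤ 2 * Real.sqrt δ := by
      have h2s : (2*Real.sqrt δ)^2 = 4*δ := by
        rw [mul_pow, Real.sq_sqrt hδpos.le]; ring
      have hb : (0:ℝ) ≤ 2 * Real.sqrt δ := mul_nonneg (by norm_num) (Real.sqrt_nonneg δ)
      exact (pow_le_pow_iff_left₀ (norm_nonneg _) hb (two_ne_zero)).mp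
        (by rw [h2s]; exact hd2)
    -- relate u - 1 to exp - w
    have hrel : (u n t - 1) = (Complex.exp (-Complex.I * om n * t) - w n.1) * (starRingEnd ℂ) (w n.1) := by
      have h1 : w n.1 * (starRingEnd ℂ) (w n.1) = 1 := by
        rw [Complex.mul_conj]
        have := Complex.sq_norm (w n.1); rw [hwabs] at this
        rw [show Complex.normSq (w n.1) = 1 from by simpa using this.symm]
        norm_num
      have hu' : u n t = Complex.exp (-Complex.I * om n * t) * (starRingEnd ℂ) (w n.1) := rfl
      rw [sub_mul, h1, ← hu']
    calc ‖Complex.exp (-Complex.I * om n * t) - w n.1‖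
        = ‖u n t - 1‖ := by
          rw [hrel, norm_mul, Complex.norm_conj, hwabs, mul_one]
      _ ≤ 2 * Real.sqrt δ := hd
  -- conclude
  refine ⟨t, ?_⟩
  have hsplit : (∑ n, (a n : ℂ) * Complex.exp (-Complex.I * (E n : ℂ) * (t : ℂ)))
      = Complex.exp (-Complex.I * (E n0 : ℂ) * t)
        * ∑ n : ι, (a n.1 : ℂ) * (Complex.exp (-Complex.I * om n * t) - w n.1) := by
    rw [Finset.mul_sum]
    rw [sum_split_ne n0 (fun n => (a n : ℂ) * Complex.exp (-Complex.I * (E n : ℂ) * (t : ℂ)))]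
    have hterm : ∀ n : ι, Complex.exp (-Complex.I * (E n0 : ℂ) * t)
        * ((a n.1 : ℂ) * (Complex.exp (-Complex.I * om n * t) - w n.1))
        = (a n.1 : ℂ) * Complex.exp (-Complex.I * (E n.1 : ℂ) * t)
          - (a n.1:ℂ) * w n.1 * Complex.exp (-Complex.I * (E n0 : ℂ) * t) := by
      intro n
      have hexp : Complex.exp (-Complex.I * (E n0 : ℂ) * t) * Complex.exp (-Complex.I * om n * t)
          = Complex.exp (-Complex.I * (E n.1 : ℂ) * t) := by
        rw [← Complex.exp_add]
        congr 1
        rw [hom]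
        push_cast
        ring
      linear_combination (a n.1 : ℂ) * hexp
    rw [Finset.sum_congr rfl (fun n _ => hterm n)]
    rw [Finset.sum_sub_distrib]
    rw [← Finset.sum_mul, hwsumι]
    ring
  rw [hsplit, norm_mul]
  have he1 : ‖Complex.exp (-Complex.I * (E n0 : ℂ) * t)‖ = 1 := by
    rw [Complex.norm_exp]
    simp [mul_comm, mul_assoc]
  rw [he1, one_mul]
  have hbound : ‖∑ n : ι, (a n.1 : ℂ) * (Complex.exp (-Complex.I * om n * t) - w n.1)‖
      ≤ 2 * Real.sqrt δ := by
    calc ‖∑ n : ι, (a n.1 : ℂ) * (Complex.exp (-Complex.I * om n * t) - w n.1)‖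
        ≤ ∑ n : ι, ‖(a n.1 : ℂ) * (Complex.exp (-Complex.I * om n * t) - w n.1)‖ := by
          exact
            norm_sum_le Finset.univ
              (fun n : ι => (a n.1 : ℂ) * (Complex.exp (-Complex.I * om n * t) - w n.1))
      _ ≤ ∑ n : ι, a n.1 * (2 * Real.sqrt δ) := by
          apply Finset.sum_le_sum
          intro n _
          rw [norm_mul, Complex.norm_real, Real.norm_eq_abs, _root_.abs_of_nonneg (ha n.1)]
          exact mul_le_mul_of_nonneg_left (hclose n) (ha n.1)
      _ = (∑ n : ι, a n.1) * (2 * Real.sqrt δ) := by rw [Finset.sum_mul]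
      _ ≤ 1 * (2 * Real.sqrt δ) := by
          apply mul_le_mul_of_nonneg_right _ (by positivity)
          have := sum_split_ne n0 a
          rw [hsum] at this
          linarith [ha n0]
      _ = 2 * Real.sqrt δ := by ring
  have hfin : 2 * Real.sqrt δ < ε := by
    have h1 : (2*Real.sqrt δ)^2 = 4*δ := by rw [mul_pow, Real.sq_sqrt hδpos.le]; ring
    have h2 : 4*δ ≤ ε^2/2 := by
      have := min_le_left (ε^2/8) (1/2)
      calc 4*δ ≤ 4*(ε^2/8) := by linarith [hδdef ▸ this]
        _ = ε^2/2 := by ring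
    nlinarith [Real.sqrt_nonneg δ, hε]
  linarith [hbound, hfin]
end
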